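/- arXiv:1506.01295 — 3 statements merged into one kernel-verified Lean document; each statement's English description precedes it below -/
import Mathlib

section
/- Consider global holomorphic super vector fields on the split (1|1)-supermanifold over ℙ¹ associated to the line bundle of degree −k. In the standard coordinate z on the chart U₀, a vector field (a(z) + b(z)θ)∂/∂z + (c(z) + d(z)θ)∂/∂θ extends to a global field iff a is a polynomial of degree ≤ 2 with d(z) = β + k·a₂z (where a₂ is the leading coefficient of a and β ∈ ℂ), c is a polynomial of degree ≤ k, and b is a polynomial of degree ≤ 2−k (with the convention that a polynomial of negative maximal degree is 0). -/
open Polynomial Filter Topology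

/-- Core lemma, natural exponent: if `F w = w^n f(1/w)` off `0` with `f, F` entire,
then `f` is a polynomial of degree `≤ n`. -/
lemma keyNat : ∀ (n : ℕ) (f F : ℂ → ℂ), Differentiable ℂ f → Differentiable ℂ F →
    (∀ w : ℂ, w ≠ 0 → F w = w ^ n * f w⁻¹) →
    ∃ p : Polynomial ℂ, (∀ z, f z = p.eval z) ∧ p.degree ≤ n := by
  intro n
  induction n with
  | zero =>
    intro f F hf hF h
    have hinv : Tendsto (fun z : ℂ => z⁻¹) (cocompact ℂ) (𝓝 0) := by
      rw [← Metric.cobounded_eq_cocompact]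
      exact tendsto_inv₀_cobounded
    have h1 : Tendsto (fun z : ℂ => F z⁻¹) (cocompact ℂ) (𝓝 (F 0)) :=
      (hF.continuous.tendsto 0).comp hinv
    have h2 : Tendsto f (cocompact ℂ) (𝓝 (F 0)) := by
      refine h1.congr' ?_
      filter_upwards [(isCompact_singleton (x := (0:ℂ))).compl_mem_cocompact] with z hz
      have hz0 : z ≠ 0 := by simpa using hz
      have := h z⁻¹ (inv_ne_zero hz0)
      simpa [inv_inv] using this
    have := hf.eq_const_of_tendsto_cocompact h2
    refine ⟨Polynomial.C (F 0), fun z => ?_, by simpa using degree_C_le⟩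
    simp [this]
  | succ n ih =>
    intro f F hf hF h
    set g : ℂ → ℂ := dslope f 0 with hg
    have hgd : Differentiable ℂ g := by
      intro z
      rcases eq_or_ne z 0 with rfl | hz
      · obtain ⟨p, hp⟩ := (hf.analyticAt 0)
        exact hp.has_fpower_series_dslope_fslope.analyticAt.differentiableAt
      · exact (differentiableAt_dslope_of_ne hz).mpr (hf z)
    have hG : Differentiable ℂ fun w => F w - f 0 * w ^ (n + 1) := by
      exact hF.sub ((differentiable_const _).mul (differentiable_pow _))
    have hkey : ∀ w : ℂ, w ≠ 0 → F w - f 0 * w ^ (n + 1) = w ^ n * g w⁻¹ := by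
      intro w hw
      have hgw : g w⁻¹ = w * (f w⁻¹ - f 0) := by
        rw [hg, dslope_of_ne _ (inv_ne_zero hw), slope_def_field]
        field_simp; try ring
      rw [h w hw, hgw]; ring
    obtain ⟨q, hq, hqdeg⟩ := ih g _ hgd hG hkey
    refine ⟨Polynomial.C (f 0) + Polynomial.X * q, fun z => ?_, ?_⟩
    · rcases eq_or_ne z 0 with rfl | hz
      · simp
      · have : g z = (f z - f 0) / z := by
          rw [hg, dslope_of_ne _ hz, slope_def_field]; field_simp; try ring
        have hfz : f z = f 0 + z * g z := by rw [this]; field_simp; try ring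
        simp [hfz, hq z]
    · refine (degree_add_le _ _).trans (max_le ?_ ?_)
      · exact degree_C_le.trans (by exact_mod_cast Nat.cast_le.mpr (Nat.zero_le _))
      · refine (degree_mul_le _ _).trans ?_
        calc Polynomial.X.degree + q.degree ≤ 1 + (n : WithBot ℕ) := by
              exact add_le_add degree_X_le hqdeg
          _ = ((n + 1 : ℕ) : WithBot ℕ) := by
              rw [add_comm]; exact_mod_cast rfl

/-- Core lemma, integer exponent. -/
lemma keyInt (n : ℤ) (f F : ℂ → ℂ) (hf : Differentiable ℂ f) (hF : Differentiable ℂ F)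
    (h : ∀ w : ℂ, w ≠ 0 → F w = w ^ n * f w⁻¹) :
    ∃ p : Polynomial ℂ, (∀ z, f z = p.eval z) ∧ ∀ j : ℕ, n < (j : ℤ) → p.coeff j = 0 := by
  rcases le_or_gt 0 n with hn | hn
  · have h' : ∀ w : ℂ, w ≠ 0 → F w = w ^ n.toNat * f w⁻¹ := by
      intro w hw
      rw [h w hw, ← zpow_natCast, Int.toNat_of_nonneg hn]
    obtain ⟨p, hp, hpd⟩ := keyNat n.toNat f F hf hF h'
    refine ⟨p, hp, fun j hj => ?_⟩
    have : n.toNat < j := by omega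
    exact (degree_le_iff_coeff_zero p n.toNat).mp hpd j (by exact_mod_cast this)
  · -- n < 0 : f ≡ 0
    set m := (-n).toNat with hm
    have hm1 : 1 ≤ m := by omega
    have h' : ∀ w : ℂ, w ≠ 0 → w ^ m * F w = w ^ (0:ℕ) * f w⁻¹ := by
      intro w hw
      rw [h w hw, ← mul_assoc, ← zpow_natCast w m, ← zpow_add₀ hw]
      have : (m : ℤ) + n = 0 := by omega
      rw [this]; simp
    obtain ⟨p, hp, hpd⟩ := keyNat 0 f (fun w => w ^ m * F w) hf
      ((differentiable_pow m).mul hF) h'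
    have hpc : p = Polynomial.C (p.coeff 0) := eq_C_of_degree_le_zero (by simpa using hpd)
    have hconst : ∀ z, f z = p.coeff 0 := by
      intro z; rw [hp z, hpc]; simp
    -- show the constant is 0 by continuity
    have heq : Set.EqOn (fun w : ℂ => w ^ m * F w) (fun _ => p.coeff 0) {(0:ℂ)}ᶜ := by
      intro w hw
      have hw0 : w ≠ 0 := by simpa using hw
      have := h' w hw0
      simp only [pow_zero, one_mul] at this
      simpa [this] using hconst w⁻¹
    have hcl : Set.EqOn (fun w : ℂ => w ^ m * F w) (fun _ => p.coeff 0)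
        (closure {(0:ℂ)}ᶜ) :=
      heq.closure ((continuous_pow m).mul hF.continuous) continuous_const
    have h0 : (0:ℂ) ∈ closure {(0:ℂ)}ᶜ := by
      rw [(dense_compl_singleton (0:ℂ)).closure_eq]; trivial
    have := hcl h0
    simp only [zero_pow (by omega : m ≠ 0), zero_mul] at this
    refine ⟨0, fun z => ?_, by simp⟩
    simp [hconst z, ← this]

/-- Converse construction. -/
lemma keyRev (n : ℤ) (p : Polynomial ℂ) (hp : ∀ j : ℕ, n < (j : ℤ) → p.coeff j = 0) :
    ∃ F : ℂ → ℂ, Differentiable ℂ F ∧ ∀ w : ℂ, w ≠ 0 → F w = w ^ n * p.eval w⁻¹ := by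
  refine ⟨fun w => ∑ j ∈ Finset.range (p.natDegree + 1), p.coeff j * w ^ (n - j).toNat,
    ?_, ?_⟩
  · exact Differentiable.fun_sum fun j _ =>
      (differentiable_const _).mul (differentiable_pow _)
  · intro w hw
    rw [Polynomial.eval_eq_sum_range, Finset.mul_sum]
    refine Finset.sum_congr rfl fun j hj => ?_
    by_cases hc : p.coeff j = 0
    · simp [hc]
    have hjn : (j : ℤ) ≤ n := le_of_not_gt fun hlt => hc (hp j hlt)
    have ht : ((n - j).toNat : ℤ) = n - j := Int.toNat_of_nonneg (by omega)
    rw [← zpow_natCast w (n - (j:ℤ)).toNat, ht, zpow_sub₀ hw, zpow_natCast]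
    field_simp; try ring
    rw [inv_pow, mul_inv_cancel₀ (pow_ne_zero _ hw)]

/-- a super vector field `(a(z)+b(z)θ)∂/∂z + (c(z)+d(z)θ)∂/∂θ`
on the `z`-chart of the split `(1|1)`-supermanifold over `ℙ¹` associated to the
line bundle of degree `−k` (transition `w = 1/z`, `η = z^{−k}θ`) extends to a
global holomorphic super vector field iff `a` is a polynomial of degree `≤ 2`,
`d(z) = β + k·a₂·z` with `a₂` the `z²`-coefficient of `a`, `c` is a polynomial
of degree `≤ k` and `b` a polynomial of degree `≤ 2−k` (a polynomial of
negative maximal degree being `0`). -/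
theorem stmt_12 (k : ℤ) (a b c d : ℂ → ℂ)
    (ha : Differentiable ℂ a) (hb : Differentiable ℂ b)
    (hc : Differentiable ℂ c) (hd : Differentiable ℂ d) :
    ((∃ A : ℂ → ℂ, Differentiable ℂ A ∧
        ∀ w : ℂ, w ≠ 0 → A w = -(w ^ 2) * a w⁻¹) ∧
     (∃ B : ℂ → ℂ, Differentiable ℂ B ∧
        ∀ w : ℂ, w ≠ 0 → B w = -(w ^ ((2 : ℤ) - k)) * b w⁻¹) ∧
     (∃ C : ℂ → ℂ, Differentiable ℂ C ∧
        ∀ w : ℂ, w ≠ 0 → C w = w ^ k * c w⁻¹) ∧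
     (∃ D : ℂ → ℂ, Differentiable ℂ D ∧
        ∀ w : ℂ, w ≠ 0 → D w = d w⁻¹ - (k : ℂ) * w * a w⁻¹))
    ↔
    ∃ pa pb pc : Polynomial ℂ, ∃ β : ℂ,
      (∀ z, a z = pa.eval z) ∧ pa.degree ≤ 2 ∧
      (∀ z, b z = pb.eval z) ∧ (∀ j : ℕ, (2 : ℤ) - k < (j : ℤ) → pb.coeff j = 0) ∧
      (∀ z, c z = pc.eval z) ∧ (∀ j : ℕ, k < (j : ℤ) → pc.coeff j = 0) ∧
      (∀ z, d z = β + (k : ℂ) * pa.coeff 2 * z) := by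
  constructor
  · rintro ⟨⟨A, hA, hAe⟩, ⟨B, hB, hBe⟩, ⟨C, hC, hCe⟩, ⟨D, hD, hDe⟩⟩
    obtain ⟨pa, hpa, hpac⟩ := keyInt 2 a (fun w => -A w) ha hA.neg (by
      intro w hw
      show -A w = _
      rw [hAe w hw, show (2:ℤ) = ((2:ℕ):ℤ) from rfl, zpow_natCast]; ring)
    obtain ⟨pb, hpb, hpbc⟩ := keyInt (2 - k) b (fun w => -B w) hb hB.neg (by
      intro w hw; show -B w = _; rw [hBe w hw]; ring)
    obtain ⟨pc, hpc, hpcc⟩ := keyInt k c C hc hC hCe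
    have hdeg : pa.degree ≤ 2 := (degree_le_iff_coeff_zero pa 2).mpr
      (fun m hm => hpac m (by exact_mod_cast hm))
    have hnd : pa.natDegree < 3 := by
      have h2 : pa.natDegree ≤ 2 :=
        Polynomial.natDegree_le_iff_degree_le.mpr (by exact_mod_cast hdeg)
      omega
    have haev : ∀ w : ℂ, a w = pa.coeff 0 + pa.coeff 1 * w + pa.coeff 2 * w ^ 2 := by
      intro w
      rw [hpa w, Polynomial.eval_eq_sum_range' hnd]
      simp [Finset.sum_range_succ]; try ring
    obtain ⟨pe, hpe, hpec⟩ := keyInt 0 (fun z => d z - k * pa.coeff 2 * z)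
        (fun w => D w + k * pa.coeff 0 * w + k * pa.coeff 1)
        (by fun_prop) (by fun_prop) (by
      intro w hw
      simp only [hDe w hw, haev w⁻¹, zpow_zero, one_mul]
      field_simp
      ring)
    have hpeC : pe = Polynomial.C (pe.coeff 0) := eq_C_of_degree_le_zero
      ((degree_le_iff_coeff_zero pe 0).mpr fun m hm => hpec m (by exact_mod_cast hm))
    refine ⟨pa, pb, pc, pe.coeff 0, hpa, hdeg, hpb, hpbc, hpc, hpcc, fun z => ?_⟩
    have h1 := hpe z
    rw [hpeC] at h1
    simp only [eval_C] at h1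
    linear_combination h1
  · rintro ⟨pa, pb, pc, β, hpa, hdeg, hpb, hpbc, hpc, hpcc, hdz⟩
    have hpac : ∀ j : ℕ, (2:ℤ) < (j:ℤ) → pa.coeff j = 0 := fun j hj =>
      (degree_le_iff_coeff_zero pa 2).mp hdeg j (by exact_mod_cast hj)
    have hnd : pa.natDegree < 3 := by
      have h2 : pa.natDegree ≤ 2 :=
        Polynomial.natDegree_le_iff_degree_le.mpr (by exact_mod_cast hdeg)
      omega
    have haev : ∀ w : ℂ, a w = pa.coeff 0 + pa.coeff 1 * w + pa.coeff 2 * w ^ 2 := by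
      intro w
      rw [hpa w, Polynomial.eval_eq_sum_range' hnd]
      simp [Finset.sum_range_succ]; try ring
    obtain ⟨FA, hFA, hFAe⟩ := keyRev 2 pa hpac
    obtain ⟨FB, hFB, hFBe⟩ := keyRev (2 - k) pb hpbc
    obtain ⟨FC, hFC, hFCe⟩ := keyRev k pc hpcc
    refine ⟨⟨fun w => -FA w, hFA.neg, fun w hw => ?_⟩,
            ⟨fun w => -FB w, hFB.neg, fun w hw => ?_⟩,
            ⟨FC, hFC, fun w hw => ?_⟩,
            ⟨fun w => β - k * pa.coeff 1 - k * pa.coeff 0 * w, by fun_prop,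
              fun w hw => ?_⟩⟩
    · show -FA w = _
      rw [hFAe w hw, hpa w⁻¹, show (2:ℤ) = ((2:ℕ):ℤ) from rfl, zpow_natCast]; ring
    · show -FB w = _
      rw [hFBe w hw, hpb w⁻¹]; ring
    · rw [hFCe w hw, hpc w⁻¹]
    · show (β:ℂ) - k * pa.coeff 1 - k * pa.coeff 0 * w = _
      rw [hdz w⁻¹, haev w⁻¹]
      field_simp
      ring
end

section
/- For k ∈ ℤ, the even holomorphic super vector fields on the split (1|1)-supermanifold over ℙ¹ associated to 𝒪(−k) form a Lie algebra isomorphic to 𝔰𝔩₂(ℂ) ⊕ ℂ, via ((a b; c −a), d) ↦ (−b − 2az + cz²)∂/∂z + ((d − ka) + kcz) θ ∂/∂θ. -/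
noncomputable section

open Polynomial

/-- Superfunctions `p + qθ` on the chart `U₀` of the split `(1|1)`-supermanifold
over `ℙ¹`, with polynomial coefficients. -/
abbrev M13 : Type := Polynomial ℂ × Polynomial ℂ

/-- The even super vector field `(−b−2az+cz²)∂/∂z + (e+kcz)θ∂/∂θ` acting on
superfunctions `p + qθ`. -/
noncomputable def W13 (k : ℤ) (a b c e : ℂ) : M13 → M13 :=
  fun m =>
    ((C (-b) + C (-(2 * a)) * X + C c * X ^ 2) * derivative m.1,
     (C (-b) + C (-(2 * a)) * X + C c * X ^ 2) * derivative m.2 +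
       (C e + C ((k : ℂ) * c) * X) * m.2)

/-- The map `((a b; c −a), d) ↦ (−b−2az+cz²)∂/∂z + ((d−ka)+kcz)θ∂/∂θ`. -/
noncomputable def Φ13 (k : ℤ) (A : Matrix (Fin 2) (Fin 2) ℂ) (d : ℂ) : M13 → M13 :=
  W13 k (A 0 0) (A 0 1) (A 1 0) (d - (k : ℂ) * A 0 0)

set_option maxHeartbeats 1000000 in
/-- the even holomorphic super vector fields on the split
`(1|1)`-supermanifold over `ℙ¹` associated to `𝒪(−k)` form a Lie algebra
isomorphic to `𝔰𝔩₂(ℂ) ⊕ ℂ` via `Φ13`: the map is injective, linear, has as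
image exactly the even vector fields, and carries the bracket of
`𝔰𝔩₂(ℂ) ⊕ ℂ` (with `ℂ` central) to the commutator of vector fields. -/
theorem stmt_13 (k : ℤ) :
    (∀ (A A' : Matrix (Fin 2) (Fin 2) ℂ) (d d' : ℂ),
      A 1 1 = -(A 0 0) → A' 1 1 = -(A' 0 0) →
      Φ13 k A d = Φ13 k A' d' → A = A' ∧ d = d') ∧
    (∀ (A A' : Matrix (Fin 2) (Fin 2) ℂ) (d d' : ℂ) (m : M13),
      Φ13 k (A + A') (d + d') m = Φ13 k A d m + Φ13 k A' d' m) ∧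
    (∀ (s : ℂ) (A : Matrix (Fin 2) (Fin 2) ℂ) (d : ℂ) (m : M13),
      Φ13 k (s • A) (s * d) m = s • Φ13 k A d m) ∧
    (∀ a b c e : ℂ, ∃ (A : Matrix (Fin 2) (Fin 2) ℂ) (d : ℂ),
      A 1 1 = -(A 0 0) ∧ Φ13 k A d = W13 k a b c e) ∧
    (∀ (A A' : Matrix (Fin 2) (Fin 2) ℂ) (d d' : ℂ),
      A 1 1 = -(A 0 0) → A' 1 1 = -(A' 0 0) →
      ∀ m : M13, Φ13 k (A * A' - A' * A) 0 m =
        Φ13 k A d (Φ13 k A' d' m) - Φ13 k A' d' (Φ13 k A d m)) := by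
  have winj : ∀ a b c e a' b' c' e' : ℂ, W13 k a b c e = W13 k a' b' c' e' →
      a = a' ∧ b = b' ∧ c = c' ∧ e = e' := by
    intro a b c e a' b' c' e' h
    have h1 := congrFun h (X, 1)
    have hp : (C (-b) + C (-(2 * a)) * X + C c * X ^ 2)
        = (C (-b') + C (-(2 * a')) * X + C c' * X ^ 2) := by
      have := congrArg Prod.fst h1
      simpa [W13] using this
    have hq : (C e + C ((k : ℂ) * c) * X) = (C e' + C ((k : ℂ) * c') * X) := by
      have := congrArg Prod.snd h1
      simpa [W13] using this
    have hb : -b = -b' := by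
      have := congrArg (fun p => Polynomial.coeff p 0) hp
      simpa using this
    have ha : -(2 * a) = -(2 * a') := by
      have := congrArg (fun p => Polynomial.coeff p 1) hp
      simpa using this
    have hc : c = c' := by
      have := congrArg (fun p => Polynomial.coeff p 2) hp
      simpa using this
    have he : e = e' := by
      have := congrArg (fun p => Polynomial.coeff p 0) hq
      simpa using this
    refine ⟨by linear_combination (-1/2 : ℂ) * ha, by linear_combination -hb, hc, he⟩
  refine ⟨?_, ?_, ?_, ?_, ?_⟩
  · intro A A' d d' h h' heq
    obtain ⟨ha, hb, hc, he⟩ := winj _ _ _ _ _ _ _ _ heq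
    constructor
    · ext i j
      fin_cases i <;> fin_cases j
      · exact ha
      · exact hb
      · exact hc
      · rw [show ((⟨1, by omega⟩ : Fin 2) = 1) from rfl] at *
        rw [h, h', ha]
    · linear_combination he + (k : ℂ) * ha
  · intro A A' d d' m
    simp only [Φ13, W13, Matrix.add_apply, Prod.mk_add_mk, Prod.mk.injEq,
      map_add, map_sub, map_neg, map_mul, map_ofNat, map_zero]
    constructor <;> push_cast <;> ring
  · intro s A d m
    simp only [Φ13, W13, Matrix.smul_apply, smul_eq_mul, Prod.smul_mk, Prod.mk.injEq,
      smul_add, smul_eq_C_mul, map_add, map_sub, map_neg, map_mul, map_ofNat, map_zero]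
    constructor <;> push_cast <;> ring
  · intro a b c e
    refine ⟨!![a, b; c, -a], e + (k : ℂ) * a, by simp, ?_⟩
    simp [Φ13]
  · intro A A' d d' h h' m
    obtain ⟨p, q⟩ := m
    simp only [Φ13, W13, Matrix.sub_apply, Matrix.mul_apply, Fin.sum_univ_two, h, h',
      derivative_add, derivative_mul, derivative_C, derivative_X, derivative_X_pow, derivative_ofNat, Nat.cast_ofNat, Prod.mk.injEq,
      Prod.mk_sub_mk, map_add, map_sub, map_neg, map_mul, map_ofNat, map_zero]
    constructor <;> push_cast <;> ring
end
end

section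
/- Let a₀, a₁ : ℂ → ℂ be entire and A₀, A₁ : ℂ → M₂(ℂ) entire matrix-valued functions, satisfying for all w ∈ ℂ*: A₁(w) = A₀(1/w) and a₁(w) = (1/w)((det A₀(1/w) − 1) − (1/w) a₀(1/w)). Then A₀ = A₁ is a constant matrix, det A₀ = 1, and a₀ = a₁ = 0. -/
lemma aux_const_of_inv (f g : ℂ → ℂ) (hf : Differentiable ℂ f)
    (hg : Differentiable ℂ g) (h : ∀ z : ℂ, z ≠ 0 → f z = g z⁻¹) :
    ∀ z w : ℂ, f z = f w := by
  have hb : Bornology.IsBounded (Set.range f) := by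
    have h1 : Bornology.IsBounded (f '' Metric.closedBall 0 1) :=
      ((isCompact_closedBall (0:ℂ) 1).image hf.continuous).isBounded
    have h2 : Bornology.IsBounded (g '' Metric.closedBall 0 1) :=
      ((isCompact_closedBall (0:ℂ) 1).image hg.continuous).isBounded
    refine (h1.union h2).subset ?_
    rintro _ ⟨z, rfl⟩
    by_cases hz : ‖z‖ ≤ 1
    · exact Or.inl ⟨z, by simpa [Metric.mem_closedBall, dist_eq_norm] using hz, rfl⟩
    · have hz0 : z ≠ 0 := by
        intro h0; simp [h0] at hz
      right
      refine ⟨z⁻¹, ?_, (h z hz0).symm⟩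
      simp only [Metric.mem_closedBall, dist_zero_right, norm_inv]
      rw [inv_le_one₀ (by linarith [not_le.mp hz])]
      linarith [not_le.mp hz]
  exact fun z w => hf.apply_eq_apply_of_bounded hb z w

lemma aux_ext0 (f : ℂ → ℂ) (hf : Continuous f) (c : ℂ)
    (h : ∀ z : ℂ, z ≠ 0 → f z = c) : f 0 = c := by
  have h1 : Filter.Tendsto f (nhdsWithin 0 {(0:ℂ)}ᶜ) (nhds (f 0)) :=
    (hf.tendsto 0).mono_left nhdsWithin_le_nhds
  have h2 : Filter.Tendsto f (nhdsWithin 0 {(0:ℂ)}ᶜ) (nhds c) := by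
    apply Filter.Tendsto.congr' _ tendsto_const_nhds
    filter_upwards [self_mem_nhdsWithin] with z hz
    exact (h z hz).symm
  exact tendsto_nhds_unique h1 h2

/-- computation of `ker Ψ ≅ SL₂(ℂ)` for the nonsplit
`(1|2)`-supermanifold over `ℙ¹`: if entire `a₀, a₁ : ℂ → ℂ` and entire
matrix-valued `A₀, A₁ : ℂ → M₂(ℂ)` satisfy, for all `w ≠ 0`,
`A₁(w) = A₀(1/w)` and
`a₁(w) = (1/w)((det A₀(1/w) − 1) − (1/w)a₀(1/w))`, then `A₀ = A₁` is a
constant matrix of determinant `1` and `a₀ = a₁ = 0`. -/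
theorem stmt_17 (a₀ a₁ : ℂ → ℂ) (A₀ A₁ : ℂ → Matrix (Fin 2) (Fin 2) ℂ)
    (ha₀ : Differentiable ℂ a₀) (ha₁ : Differentiable ℂ a₁)
    (hA₀ : ∀ i j, Differentiable ℂ fun z => A₀ z i j)
    (hA₁ : ∀ i j, Differentiable ℂ fun z => A₁ z i j)
    (hA : ∀ w : ℂ, w ≠ 0 → A₁ w = A₀ w⁻¹)
    (ha : ∀ w : ℂ, w ≠ 0 →
      a₁ w = w⁻¹ * (((A₀ w⁻¹).det - 1) - w⁻¹ * a₀ w⁻¹)) :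
    (∃ B : Matrix (Fin 2) (Fin 2) ℂ, (∀ w, A₀ w = B) ∧ (∀ w, A₁ w = B) ∧
      B.det = 1) ∧ (∀ w, a₀ w = 0) ∧ (∀ w, a₁ w = 0) := by
  set B := A₁ 0 with hB
  -- A₁ is constant
  have hA₁c : ∀ w, A₁ w = B := by
    intro w
    ext i j
    exact aux_const_of_inv _ _ (hA₁ i j) (hA₀ i j)
      (fun z hz => by rw [hA z hz]) w 0
  -- A₀ equals B off 0
  have hA₀c' : ∀ w : ℂ, w ≠ 0 → A₀ w = B := by
    intro w hw
    have := hA w⁻¹ (inv_ne_zero hw)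
    rw [inv_inv] at this
    rw [← this, hA₁c]
  have hA₀c : ∀ w, A₀ w = B := by
    intro w
    by_cases hw : w = 0
    · subst hw
      ext i j
      exact aux_ext0 _ (hA₀ i j).continuous _ (fun z hz => by rw [hA₀c' z hz])
    · exact hA₀c' w hw
  set c := B.det - 1 with hc
  set h : ℂ → ℂ := fun w => c * w - w ^ 2 * a₁ w with hh
  have hhd : Differentiable ℂ h := by
    apply Differentiable.sub
    · exact (differentiable_const c).mul differentiable_id
    · exact (differentiable_id.pow 2).mul ha₁
  -- key relation: h w = a₀ w⁻¹ for w ≠ 0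
  have hrel : ∀ w : ℂ, w ≠ 0 → h w = a₀ w⁻¹ := by
    intro w hw
    have := ha w hw
    rw [hA₀c] at this
    simp only [hh, this, ← hc]
    field_simp
    ring
  -- h is constant, h 0 = 0, so h ≡ 0
  have hhc : ∀ w, h w = h 0 :=
    fun w => aux_const_of_inv h a₀ hhd ha₀ hrel w 0
  have hh0 : h 0 = 0 := by simp [hh]
  have hh02 : ∀ w, h w = 0 := fun w => (hhc w).trans hh0
  -- a₀ ≡ 0
  have ha₀z : ∀ w : ℂ, w ≠ 0 → a₀ w = 0 := by
    intro w hw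
    have := hrel w⁻¹ (inv_ne_zero hw)
    rw [inv_inv, hh02] at this
    exact this.symm
  have ha₀0 : ∀ w, a₀ w = 0 := by
    intro w
    by_cases hw : w = 0
    · subst hw
      exact aux_ext0 _ ha₀.continuous _ ha₀z
    · exact ha₀z w hw
  -- c = 0
  have hceq : ∀ w : ℂ, w ≠ 0 → w * a₁ w = c := by
    intro w hw
    have := hh02 w
    simp only [hh] at this
    have h2 : (w * a₁ w) * w = c * w := by ring_nf; linear_combination -this
    exact mul_right_cancel₀ hw h2
  have hc0 : c = 0 := by
    have := aux_ext0 (fun w => w * a₁ w)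
      (continuous_id.mul ha₁.continuous) c hceq
    simpa using this.symm
  -- a₁ ≡ 0
  have ha₁z : ∀ w : ℂ, w ≠ 0 → a₁ w = 0 := by
    intro w hw
    have := hceq w hw
    rw [hc0, mul_eq_zero] at this
    exact this.resolve_left hw
  have ha₁0 : ∀ w, a₁ w = 0 := by
    intro w
    by_cases hw : w = 0
    · subst hw
      exact aux_ext0 _ ha₁.continuous _ ha₁z
    · exact ha₁z w hw
  refine ⟨⟨B, hA₀c, hA₁c, ?_⟩, ha₀0, ha₁0⟩
  have : B.det - 1 = 0 := by rw [← hc, hc0]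
  linear_combination this
end
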